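/- Assume in addition that F ≥ 0 on ℝ and that the stabilization constants satisfy the strict inequalities A > L²γ/(16ε²) and B > L/(2ε). Then the increments of the SL-CN solution are square-summable, ∑_{n≥1} ‖δ_tφ^{n+1}‖² < ∞, and in particular ‖φ^{n+1} − φ^n‖ → 0 as n → ∞. -/

import Mathlib

open scoped RealInnerProductSpace
set_option maxHeartbeats 1000000

open Finset Filter
open intervalIntegral in

private theorem aux_taylor_sharp (F : ℝ → ℝ) (L : ℝ) (hL : 0 ≤ L)
    (hFd : Differentiable ℝ F) (hcont : Continuous (deriv F))
    (hlip : ∀ u v : ℝ, |deriv F v - deriv F u| ≤ L * |v - u|) (u v : ℝ) :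
    |F v - F u - deriv F u * (v - u)| ≤ L / 2 * (v - u) ^ 2 := by
  have hFTC : ∫ t in u..v, deriv F t = F v - F u :=
    intervalIntegral.integral_deriv_eq_sub (fun t _ => hFd t) (hcont.intervalIntegrable u v)
  have hrepr : F v - F u - deriv F u * (v - u) = ∫ t in u..v, (deriv F t - deriv F u) := by
    rw [intervalIntegral.integral_sub (hcont.intervalIntegrable u v) intervalIntegrable_const,
      hFTC, intervalIntegral.integral_const]
    simp [mul_comm]
  rw [hrepr]
  have hgint : IntervalIntegrable (fun t => L * |t - u|) MeasureTheory.volume u v :=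
    (continuous_const.mul ((continuous_id.sub continuous_const).abs)).intervalIntegrable u v
  have hb := intervalIntegral.norm_integral_le_abs_of_norm_le
    (f := fun t => deriv F t - deriv F u) (g := fun t => L * |t - u|)
    (Filter.Eventually.of_forall (fun t => by simpa [Real.norm_eq_abs] using hlip u t)) hgint
  refine le_trans hb ?_
  rw [intervalIntegral.integral_const_mul]
  rcases le_total u v with h | h
  · have habs : ∫ t in u..v, |t - u| = (v - u)^2/2 := by
      have heq : Set.EqOn (fun t => |t - u|) (fun t => t - u) (Set.uIcc u v) := by
        intro t ht
        rw [Set.uIcc_of_le h] at ht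
        exact abs_of_nonneg (by linarith [ht.1])
      rw [intervalIntegral.integral_congr heq, intervalIntegral.integral_sub
        intervalIntegrable_id intervalIntegrable_const, integral_id,
        intervalIntegral.integral_const]
      simp; ring
    rw [habs, abs_of_nonneg (by positivity)]
    nlinarith
  · rw [show ∫ t in u..v, |t - u| = -∫ t in v..u, |t - u| from
      (intervalIntegral.integral_symm v u)]
    have h2 : ∫ t in v..u, |t - u| = (u - v)^2/2 := by
      have heq : Set.EqOn (fun t => |t - u|) (fun t => u - t) (Set.uIcc v u) := by
        intro t ht
        rw [Set.uIcc_of_le h] at ht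
        exact abs_of_nonpos (by linarith [ht.2]) |>.trans (by ring)
      rw [intervalIntegral.integral_congr heq, intervalIntegral.integral_sub
        intervalIntegrable_const intervalIntegrable_id, integral_id,
        intervalIntegral.integral_const]
      simp; ring
    rw [h2, abs_mul, abs_neg, abs_of_nonneg (by positivity : (0:ℝ) ≤ (u-v)^2/2),
      abs_of_nonneg hL]
    nlinarith

private theorem aux_step_scalar (F : ℝ → ℝ) (L : ℝ)
    (htay : ∀ u v : ℝ, |F v - F u - deriv F u * (v - u)| ≤ L/2*(v-u)^2)
    (hlip : ∀ u v : ℝ, |deriv F v - deriv F u| ≤ L*|v-u|) (pa pb pp : ℝ) :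
    F pb - F pa ≤ deriv F (3/2*pa - 1/2*pp) * (pb - pa) + L/4*(pb-pa)^2
      + L/2*(|(pb-pa) - (pa-pp)| * |pb-pa|) := by
  have t1 := abs_le.mp (htay ((pa+pb)/2) pb)
  have t2 := abs_le.mp (htay ((pa+pb)/2) pa)
  have t3 := hlip (3/2*pa - 1/2*pp) ((pa+pb)/2)
  have h4 : (deriv F ((pa+pb)/2) - deriv F (3/2*pa - 1/2*pp)) * (pb - pa)
      ≤ L * |(pa+pb)/2 - (3/2*pa - 1/2*pp)| * |pb - pa| :=
    le_trans (le_abs_self _) (by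
      rw [abs_mul]; exact mul_le_mul_of_nonneg_right t3 (abs_nonneg _))
  have hm : |(pa+pb)/2 - (3/2*pa - 1/2*pp)| = |(pb-pa)-(pa-pp)|/2 := by
    rw [show (pa+pb)/2 - (3/2*pa - 1/2*pp) = ((pb-pa)-(pa-pp))/2 by ring, abs_div]
    norm_num
  rw [hm] at h4
  nlinarith [t1.1, t1.2, t2.1, t2.2, h4]

/-- Remark 2.3: with `F ≥ 0` and strict stabilization inequalities, the increments of
the SL-CN solution are square-summable, hence `‖φⁿ⁺¹ − φⁿ‖ → 0`: the numerical solution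
approaches a steady state. -/
theorem stmt_5 {M : ℕ}
    (K : EuclideanSpace ℝ (Fin M) →ₗ[ℝ] EuclideanSpace ℝ (Fin M))
    (hKsa : ∀ x y : EuclideanSpace ℝ (Fin M), ⟪K x, y⟫ = ⟪x, K y⟫)
    (hKpsd : ∀ x : EuclideanSpace ℝ (Fin M), 0 ≤ ⟪K x, x⟫)
    (F : ℝ → ℝ) (hF : ContDiff ℝ 2 F) (hFnonneg : ∀ x : ℝ, 0 ≤ F x)
    (L : ℝ) (hL : 0 ≤ L) (hf' : ∀ x : ℝ, |deriv (deriv F) x| ≤ L)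
    (τ γ ε : ℝ) (hτ : 0 < τ) (hγ : 0 < γ) (hε : 0 < ε)
    (A B : ℝ) (hA : 0 ≤ A) (hB : 0 ≤ B)
    (φ μc : ℕ → EuclideanSpace ℝ (Fin M))
    (hscheme1 : ∀ n, 1 ≤ n → (1/τ) • (φ (n+1) - φ n) = -γ • K (μc n))
    (hscheme2 : ∀ n, 1 ≤ n → μc n =
      ε • K ((1/2 : ℝ) • (φ (n+1) + φ n)) +
      (1/ε) • ((WithLp.equiv 2 (Fin M → ℝ)).symm
          (fun i => deriv F ((3/2) * φ n i - (1/2) * φ (n-1) i))) +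
      (A * τ) • K (φ (n+1) - φ n) +
      B • (φ (n+1) - (2:ℝ) • φ n + φ (n-1)))
    (hAcond : A > L^2 * γ / (16 * ε^2)) (hBcond : B > L / (2 * ε)) :
    Summable (fun n : ℕ => ‖φ (n+1+1) - φ (n+1)‖^2) ∧
    Tendsto (fun n : ℕ => ‖φ (n+1) - φ n‖) atTop (nhds 0) := by
  -- basic regularity of F
  have h1F : ContDiff ℝ 1 (deriv F) := by
    have := (contDiff_succ_iff_deriv (n := 1) (f := F)).mp (by exact_mod_cast hF)
    exact this.2.2
  have hFd : Differentiable ℝ F := hF.differentiable (by norm_num)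
  have hlip : ∀ u v : ℝ, |deriv F v - deriv F u| ≤ L * |v - u| := by
    have hlw : LipschitzWith L.toNNReal (deriv F) := by
      apply lipschitzWith_of_nnnorm_deriv_le (h1F.differentiable (by norm_num))
      intro x
      rw [← NNReal.coe_le_coe]
      simpa [Real.coe_toNNReal L hL] using hf' x
    intro u v
    have := hlw.dist_le_mul v u
    simpa [Real.dist_eq, Real.coe_toNNReal L hL] using this
  have htay := aux_taylor_sharp F L hL hFd h1F.continuous hlip
  -- positivity of constants
  have hB0 : 0 < B := lt_of_le_of_lt (by positivity) hBcond
  have hA0 : 0 < A := lt_of_le_of_lt (by positivity) hAcond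
  -- norms and inner products, componentwise
  have hnormsq : ∀ x : EuclideanSpace ℝ (Fin M), ‖x‖^2 = ∑ i, (x i)^2 := by
    intro x
    rw [← real_inner_self_eq_norm_sq]
    simp only [PiLp.inner_apply, RCLike.inner_apply, conj_trivial, sq]
  have habsCS : ∀ w d : EuclideanSpace ℝ (Fin M), ∑ i, |w i| * |d i| ≤ ‖w‖ * ‖d‖ := by
    intro w d
    have h := Finset.sum_mul_sq_le_sq_mul_sq univ (fun i => |w i|) (fun i => |d i|)
    have hw : ‖w‖^2 = ∑ i, |w i|^2 := by
      rw [hnormsq w]; exact Finset.sum_congr rfl (fun i _ => (sq_abs _).symm)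
    have hd : ‖d‖^2 = ∑ i, |d i|^2 := by
      rw [hnormsq d]; exact Finset.sum_congr rfl (fun i _ => (sq_abs _).symm)
    rw [← hw, ← hd] at h
    have h1 : (0:ℝ) ≤ ∑ i, |w i| * |d i| :=
      Finset.sum_nonneg fun i _ => mul_nonneg (abs_nonneg _) (abs_nonneg _)
    nlinarith [norm_nonneg w, norm_nonneg d, mul_nonneg (norm_nonneg w) (norm_nonneg d)]
  -- Cauchy-Schwarz for the positive semidefinite form of K
  have hKCS : ∀ u v : EuclideanSpace ℝ (Fin M), ⟪K u, v⟫^2 ≤ ⟪K u, u⟫ * ⟪K v, v⟫ := by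
    intro u v
    have h : ∀ t : ℝ, 0 ≤ ⟪K v, v⟫ * (t*t) + (2*⟪K u, v⟫) * t + ⟪K u, u⟫ := by
      intro t
      have h0 := hKpsd (u + t • v)
      have e1 : ⟪K (u + t • v), u + t • v⟫
          = ⟪K u, u⟫ + t*⟪K u, v⟫ + t*⟪K v, u⟫ + (t*t)*⟪K v, v⟫ := by
        simp only [map_add, map_smul, inner_add_left, inner_add_right, real_inner_smul_left,
          real_inner_smul_right]
        ring
      have e2 : ⟪K v, u⟫ = ⟪K u, v⟫ := by rw [hKsa v u, real_inner_comm]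
      rw [e1, e2] at h0
      linarith
    have hd := discrim_le_zero h
    rw [discrim] at hd
    nlinarith
  -- the halved telescoping identity
  have hhalf : ∀ u v : EuclideanSpace ℝ (Fin M),
      ⟪u - v, K ((1/2:ℝ) • (u + v))⟫ = (⟪K u, u⟫ - ⟪K v, v⟫)/2 := by
    intro u v
    have e2 : ⟪v, K u⟫ = ⟪u, K v⟫ := by rw [← hKsa v u, real_inner_comm]
    have e3 : ⟪u, K u⟫ = ⟪K u, u⟫ := real_inner_comm _ _
    have e4 : ⟪v, K v⟫ = ⟪K v, v⟫ := real_inner_comm _ _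
    simp only [map_smul, map_add, real_inner_smul_right, inner_sub_left, inner_add_right]
    rw [e2, e3, e4]; ring
  -- energies
  set EE : ℕ → ℝ := fun n => ε/2 * ⟪K (φ n), φ n⟫ + (1/ε) * ∑ i, F (φ n i) with hEE
  set HH : ℕ → ℝ := fun n => EE n + B/2 * ‖φ n - φ (n-1)‖^2 with hHH
  have hHnn : ∀ n, 0 ≤ HH n := by
    intro n
    have h1 : 0 ≤ ε/2 * ⟪K (φ n), φ n⟫ := mul_nonneg (by positivity) (hKpsd _)
    have h2 : 0 ≤ (1/ε) * ∑ i, F (φ n i) :=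
      mul_nonneg (by positivity) (Finset.sum_nonneg fun i _ => hFnonneg _)
    have h3 : 0 ≤ B/2 * ‖φ n - φ (n-1)‖^2 := by positivity
    simp only [hHH, hEE]
    linarith
  -- the decay constant
  set s : ℝ := 2 * Real.sqrt (A/γ) with hs
  have hc : 0 < s - (L/(4*ε) + L^2/(8*ε^2*B)) := by
    have h1 : L/(4*ε) < Real.sqrt (A/γ) := by
      rw [Real.lt_sqrt (by positivity)]
      rw [lt_div_iff₀ hγ]
      calc (L/(4*ε))^2*γ = L^2*γ/(16*ε^2) := by ring
        _ < A := hAcond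
    have h2 : L^2/(8*ε^2*B) ≤ L/(4*ε) := by
      rw [div_le_div_iff₀ (by positivity) (by positivity)]
      have h3 := (div_lt_iff₀ (by positivity : (0:ℝ) < 2*ε)).mp hBcond
      nlinarith [mul_le_mul_of_nonneg_right (mul_le_mul_of_nonneg_left h3.le hL)
        (show (0:ℝ) ≤ 4*ε by positivity)]
    simp only [hs]
    linarith
  set c : ℝ := s - (L/(4*ε) + L^2/(8*ε^2*B)) with hcdef
  clear_value s c
  -- one-step energy decay
  have key : ∀ n, 1 ≤ n → HH (n+1) + c * ‖φ (n+1) - φ n‖^2 ≤ HH n := by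
    intro n hn
    have hmu := hscheme2 n hn
    -- Fact d: increment via K μ
    have fact_d : φ (n+1) - φ n = (-(τ*γ)) • K (μc n) := by
      have h := hscheme1 n hn
      have h2 : τ • ((1/τ) • (φ (n+1) - φ n)) = τ • ((-γ : ℝ) • K (μc n)) := by rw [h]
      rw [smul_smul, smul_smul, mul_one_div, div_self (ne_of_gt hτ), one_smul] at h2
      rw [h2, show τ * -γ = -(τ*γ) by ring]
    have fact2 : ⟪φ (n+1) - φ n, μc n⟫ = -(τ*γ) * ⟪K (μc n), μc n⟫ := by
      nth_rewrite 1 [fact_d]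
      rw [real_inner_smul_left]
    -- Fact 3: expansion of the scheme
    have fact3 : ⟪φ (n+1) - φ n, μc n⟫ =
        ε * ((⟪K (φ (n+1)), φ (n+1)⟫ - ⟪K (φ n), φ n⟫)/2)
        + (1/ε) * ⟪φ (n+1) - φ n, (WithLp.equiv 2 (Fin M → ℝ)).symm
            (fun i => deriv F ((3/2) * φ n i - (1/2) * φ (n-1) i))⟫
        + (A*τ) * ⟪K (φ (n+1) - φ n), φ (n+1) - φ n⟫
        + B * ((‖φ (n+1) - φ n‖^2 - ‖φ n - φ (n-1)‖^2
            + ‖(φ (n+1) - φ n) - (φ n - φ (n-1))‖^2)/2) := by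
      have e3 : φ (n+1) - (2:ℝ) • φ n + φ (n-1) = (φ (n+1) - φ n) - (φ n - φ (n-1)) := by
        module
      have e4 : ⟪φ (n+1) - φ n, (φ (n+1) - φ n) - (φ n - φ (n-1))⟫
          = (‖φ (n+1) - φ n‖^2 - ‖φ n - φ (n-1)‖^2
            + ‖(φ (n+1) - φ n) - (φ n - φ (n-1))‖^2)/2 := by
        have h5 := norm_sub_sq_real (φ (n+1) - φ n) ((φ (n+1) - φ n) - (φ n - φ (n-1)))
        have h6 : (φ (n+1) - φ n) - ((φ (n+1) - φ n) - (φ n - φ (n-1))) = φ n - φ (n-1) := by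
          abel
        rw [h6] at h5
        linarith
      have e2 : ⟪φ (n+1) - φ n, K (φ (n+1) - φ n)⟫ = ⟪K (φ (n+1) - φ n), φ (n+1) - φ n⟫ :=
        real_inner_comm _ _
      rw [hmu, e3, inner_add_right, inner_add_right, inner_add_right, real_inner_smul_right,
        real_inner_smul_right, real_inner_smul_right, real_inner_smul_right,
        hhalf (φ (n+1)) (φ n), e2, e4]
    -- Fact 4: Taylor estimate
    have fact4 : (∑ i, F (φ (n+1) i)) - (∑ i, F (φ n i)) ≤
        ⟪φ (n+1) - φ n, (WithLp.equiv 2 (Fin M → ℝ)).symm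
            (fun i => deriv F ((3/2) * φ n i - (1/2) * φ (n-1) i))⟫
        + L/4 * ‖φ (n+1) - φ n‖^2
        + L/2 * (‖(φ (n+1) - φ n) - (φ n - φ (n-1))‖ * ‖φ (n+1) - φ n‖) := by
      have h7 : ∀ i : Fin M, F (φ (n+1) i) - F (φ n i) ≤
          deriv F (3/2 * φ n i - 1/2 * φ (n-1) i) * (φ (n+1) i - φ n i)
          + L/4 * (φ (n+1) i - φ n i)^2
          + L/2 * (|(φ (n+1) i - φ n i) - (φ n i - φ (n-1) i)| * |φ (n+1) i - φ n i|) :=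
        fun i => aux_step_scalar F L htay hlip _ _ _
      have h8 := Finset.sum_le_sum (fun i (_ : i ∈ (univ : Finset (Fin M))) => h7 i)
      rw [Finset.sum_sub_distrib] at h8
      have hsplit : ∑ i : Fin M, (deriv F (3/2 * φ n i - 1/2 * φ (n-1) i) * (φ (n+1) i - φ n i)
          + L/4 * (φ (n+1) i - φ n i)^2
          + L/2 * (|(φ (n+1) i - φ n i) - (φ n i - φ (n-1) i)| * |φ (n+1) i - φ n i|))
          = (∑ i : Fin M, deriv F (3/2 * φ n i - 1/2 * φ (n-1) i) * (φ (n+1) i - φ n i))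
          + L/4 * (∑ i : Fin M, (φ (n+1) i - φ n i)^2)
          + L/2 * (∑ i : Fin M,
              |(φ (n+1) i - φ n i) - (φ n i - φ (n-1) i)| * |φ (n+1) i - φ n i|) := by
        rw [Finset.sum_add_distrib, Finset.sum_add_distrib, Finset.mul_sum, Finset.mul_sum]
      rw [hsplit] at h8
      have hA1 : (∑ i : Fin M, deriv F (3/2 * φ n i - 1/2 * φ (n-1) i) * (φ (n+1) i - φ n i))
          = ⟪φ (n+1) - φ n, (WithLp.equiv 2 (Fin M → ℝ)).symm
            (fun i => deriv F ((3/2) * φ n i - (1/2) * φ (n-1) i))⟫ := by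
        simp only [PiLp.inner_apply, RCLike.inner_apply, conj_trivial]
        exact Finset.sum_congr rfl (fun i _ => by
          show _ = deriv F (3/2 * φ n i - 1/2 * φ (n-1) i) * (φ (n+1) i - φ n i)
          ring)
      have hA2 : (∑ i : Fin M, (φ (n+1) i - φ n i)^2) = ‖φ (n+1) - φ n‖^2 :=
        by rw [hnormsq]; rfl
      have hA3 : (∑ i : Fin M,
            |(φ (n+1) i - φ n i) - (φ n i - φ (n-1) i)| * |φ (n+1) i - φ n i|)
          ≤ ‖(φ (n+1) - φ n) - (φ n - φ (n-1))‖ * ‖φ (n+1) - φ n‖ :=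
        habsCS ((φ (n+1) - φ n) - (φ n - φ (n-1))) (φ (n+1) - φ n)
      have hA3' := mul_le_mul_of_nonneg_left hA3 (by positivity : (0:ℝ) ≤ L/2)
      rw [hA1, hA2] at h8
      linarith
    -- Fact 5/6: Cauchy-Schwarz and the increment norm
    have fact5 : ⟪μc n, K (φ (n+1) - φ n)⟫^2
        ≤ ⟪K (φ (n+1) - φ n), φ (n+1) - φ n⟫ * ⟪K (μc n), μc n⟫ := by
      rw [real_inner_comm]
      exact hKCS _ _
    have fact6 : ‖φ (n+1) - φ n‖^2 = -(τ*γ) * ⟪μc n, K (φ (n+1) - φ n)⟫ := by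
      calc ‖φ (n+1) - φ n‖^2 = ⟪φ (n+1) - φ n, φ (n+1) - φ n⟫ :=
            (real_inner_self_eq_norm_sq _).symm
        _ = ⟪(-(τ*γ)) • K (μc n), φ (n+1) - φ n⟫ := by rw [← fact_d]
        _ = -(τ*γ) * ⟪K (μc n), φ (n+1) - φ n⟫ := real_inner_smul_left _ _ _
        _ = -(τ*γ) * ⟪μc n, K (φ (n+1) - φ n)⟫ := by rw [hKsa]
    -- Fact 7: absorption via the A and γ terms
    have fact7 : s * ‖φ (n+1) - φ n‖^2
        ≤ A*τ*⟪K (φ (n+1) - φ n), φ (n+1) - φ n⟫ + τ*γ*⟪K (μc n), μc n⟫ := by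
      have hP := hKpsd (φ (n+1) - φ n)
      have hQ := hKpsd (μc n)
      have hs2 : s^2 * γ = 4*A := by
        rw [hs, mul_pow, Real.sq_sqrt (by positivity : (0:ℝ) ≤ A/γ)]
        have hdc : A/γ*γ = A := div_mul_cancel₀ A (ne_of_gt hγ)
        linarith
      have h4 : (s * ‖φ (n+1) - φ n‖^2)^2
          = 4*A*(τ^2*γ*⟪μc n, K (φ (n+1) - φ n)⟫^2) := by
        rw [fact6, show (s * (-(τ*γ) * ⟪μc n, K (φ (n+1) - φ n)⟫))^2
          = (s^2*γ) * (τ^2*γ*⟪μc n, K (φ (n+1) - φ n)⟫^2) from by ring, hs2]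
      have hXnn : 0 ≤ A*τ*⟪K (φ (n+1) - φ n), φ (n+1) - φ n⟫ + τ*γ*⟪K (μc n), μc n⟫ := by
        have := mul_nonneg (by positivity : (0:ℝ) ≤ A*τ) hP
        have := mul_nonneg (by positivity : (0:ℝ) ≤ τ*γ) hQ
        linarith
      have hsnn : 0 ≤ s := by rw [hs]; positivity
      have hDnn : 0 ≤ s * ‖φ (n+1) - φ n‖^2 := mul_nonneg hsnn (sq_nonneg _)
      have hfin : (s * ‖φ (n+1) - φ n‖^2)^2
          ≤ (A*τ*⟪K (φ (n+1) - φ n), φ (n+1) - φ n⟫ + τ*γ*⟪K (μc n), μc n⟫)^2 := by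
        have h5 := mul_le_mul_of_nonneg_left fact5 (by positivity : (0:ℝ) ≤ 4*A*(τ^2*γ))
        nlinarith [sq_nonneg (A*τ*⟪K (φ (n+1) - φ n), φ (n+1) - φ n⟫ - τ*γ*⟪K (μc n), μc n⟫),
          h4, h5, mul_nonneg hP hQ]
      nlinarith [hfin, hDnn, hXnn]
    -- Fact 8: Young's inequality
    have fact8 : L/(2*ε) * (‖(φ (n+1) - φ n) - (φ n - φ (n-1))‖ * ‖φ (n+1) - φ n‖)
        ≤ B/2 * ‖(φ (n+1) - φ n) - (φ n - φ (n-1))‖^2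
          + L^2/(8*ε^2*B) * ‖φ (n+1) - φ n‖^2 := by
      have h : B/2 * ‖(φ (n+1) - φ n) - (φ n - φ (n-1))‖^2
            + L^2/(8*ε^2*B) * ‖φ (n+1) - φ n‖^2
            - L/(2*ε) * (‖(φ (n+1) - φ n) - (φ n - φ (n-1))‖ * ‖φ (n+1) - φ n‖)
          = (2*ε*B*‖(φ (n+1) - φ n) - (φ n - φ (n-1))‖ - L*‖φ (n+1) - φ n‖)^2 / (8*ε^2*B)
            + (0:ℝ) := by
        field_simp
        ring
      nlinarith [div_nonneg (sq_nonneg (2*ε*B*‖(φ (n+1) - φ n) - (φ n - φ (n-1))‖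
        - L*‖φ (n+1) - φ n‖)) (by positivity : (0:ℝ) ≤ 8*ε^2*B)]
    -- assemble
    have fact4e := mul_le_mul_of_nonneg_left fact4 (by positivity : (0:ℝ) ≤ 1/ε)
    simp only [hHH, hEE, Nat.add_sub_cancel, hcdef]
    set qb := ⟪K (φ (n+1)), φ (n+1)⟫ with hqb
    set qa := ⟪K (φ n), φ n⟫ with hqa
    set Sb := ∑ i : Fin M, F (φ (n+1) i) with hSb
    set Sa := ∑ i : Fin M, F (φ n i) with hSa
    set G := ⟪φ (n+1) - φ n, (WithLp.equiv 2 (Fin M → ℝ)).symm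
            (fun i => deriv F ((3/2) * φ n i - (1/2) * φ (n-1) i))⟫ with hG
    set P := ⟪K (φ (n+1) - φ n), φ (n+1) - φ n⟫ with hPd
    set Q := ⟪K (μc n), μc n⟫ with hQd
    set xx := ‖φ (n+1) - φ n‖ with hxx
    set yy := ‖φ n - φ (n-1)‖ with hyy
    set zz := ‖(φ (n+1) - φ n) - (φ n - φ (n-1))‖ with hzz
    ring_nf at fact2 fact3 fact4e fact7 fact8 ⊢
    linarith [fact2, fact3, fact4e, fact7, fact8]
  -- summation
  have hsum : ∀ N, HH (N+1) + c * ∑ k ∈ range N, ‖φ (k+1+1) - φ (k+1)‖^2 ≤ HH 1 := by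
    intro N
    induction N with
    | zero => simp
    | succ N ih =>
      have hk := key (N+1) (by omega)
      rw [Finset.sum_range_succ]
      have : HH (N+1+1) + c * ‖φ (N+1+1) - φ (N+1)‖^2 ≤ HH (N+1) := hk
      nlinarith
  have hsummable : Summable (fun n : ℕ => ‖φ (n+1+1) - φ (n+1)‖^2) := by
    apply summable_of_sum_range_le (c := HH 1 / c) (fun n => by positivity)
    intro N
    rw [le_div_iff₀ hc]
    have := hsum N
    have := hHnn (N+1)
    nlinarith
  refine ⟨hsummable, ?_⟩
  have h0 := hsummable.tendsto_atTop_zero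
  have h1 : Tendsto (fun n : ℕ => ‖φ (n+1+1) - φ (n+1)‖) atTop (nhds 0) := by
    have h2 := h0.sqrt
    rw [Real.sqrt_zero] at h2
    have h3 : (fun n : ℕ => Real.sqrt (‖φ (n+1+1) - φ (n+1)‖^2))
        = fun n : ℕ => ‖φ (n+1+1) - φ (n+1)‖ :=
      funext fun n => Real.sqrt_sq (norm_nonneg _)
    rwa [h3] at h2
  exact (tendsto_add_atTop_iff_nat (f := fun n : ℕ => ‖φ (n+1) - φ n‖) 1).mp h1
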